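/- Let R be a commutative ring and fix an integer a with 0 ≤ a ≤ w. Let Seg_a = {δ-monomials b : deg b = r and b_δ = r−a} and b*_a = (r−a)·e_δ + a·e_{δ+1}. Let P ∈ R[x_1,…,x_n] be supported in tar' and such that every element m of the support of P satisfies m_{δ+1} ≥ a. Then there exists a function Υ : Seg_a → R[x_1,…,x_n] such that Υ(b*_a) = P, Υ(b) is supported in tar' for every b ∈ Seg_a, and whenever b, b′ ∈ Seg_a and δ ≤ α, β ≤ n satisfy e_α + b = e_β + b′, one has X_α·Υ(b) = X_β·Υ(b′). -/

import Mathlib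

open MvPolynomial
open scoped Classical

noncomputable section

/-- Total degree of an exponent vector `m : Fin n →₀ ℕ`. -/
def mdeg {n : ℕ} (m : Fin n →₀ ℕ) : ℕ := ∑ k, m k

/-- `m` is a δ-monomial: all exponents of variables strictly before `δ` vanish. -/
def IsDeltaMon {n : ℕ} (δ : Fin n) (m : Fin n →₀ ℕ) : Prop := ∀ k < δ, m k = 0

/-- `m` is a (δ+1)-monomial: all exponents of variables up to and including `δ` vanish. -/
def IsSuccDeltaMon {n : ℕ} (δ : Fin n) (m : Fin n →₀ ℕ) : Prop := ∀ k ≤ δ, m k = 0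

/-- The order ideal `O(n,r,s,δ,w)`. -/
def OIdeal {n : ℕ} (r s w : ℕ) (δ : Fin n) : Set (Fin n →₀ ℕ) :=
  {m | mdeg m < r ∨ (IsDeltaMon δ m ∧ r ≤ mdeg m ∧ mdeg m ≤ s ∧ m δ + w + 1 ≤ r)}

/-- The border `∂O`. -/
def Border {n : ℕ} (r s w : ℕ) (δ : Fin n) : Set (Fin n →₀ ℕ) :=
  {m | m ∉ OIdeal r s w δ ∧
    ∃ (α : Fin n) (t : Fin n →₀ ℕ), t ∈ OIdeal r s w δ ∧ m = Finsupp.single α 1 + t}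

/-- The set `S_D` of "diagonal" border monomials. -/
def SD {n : ℕ} (r s w : ℕ) (δ : Fin n) : Set (Fin n →₀ ℕ) :=
  {m | m ∈ Border r s w δ ∧ IsDeltaMon δ m ∧ r + 1 ≤ mdeg m ∧ mdeg m ≤ s}

/-- The set `S_L` of "leading" monomials. -/
def SL {n : ℕ} (r w : ℕ) (δ : Fin n) : Set (Fin n →₀ ℕ) :=
  {m | IsDeltaMon δ m ∧ mdeg m = r ∧ r - w ≤ m δ}

/-- `tar = {m ∈ O : r ≤ deg m ≤ s}`. -/
def Tar {n : ℕ} (r s w : ℕ) (δ : Fin n) : Set (Fin n →₀ ℕ) :=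
  {m | m ∈ OIdeal r s w δ ∧ r ≤ mdeg m ∧ mdeg m ≤ s}

/-- `tar' = {m ∈ tar : deg m ≤ s−1}`. -/
def Tar' {n : ℕ} (r s w : ℕ) (δ : Fin n) : Set (Fin n →₀ ℕ) :=
  {m | m ∈ Tar r s w δ ∧ mdeg m ≤ s - 1}

/-- `tar'' = {m ∈ tar' : m_{δ+1} ≥ w}` (`δ'` is the index of `x_{δ+1}`). -/
def Tar'' {n : ℕ} (r s w : ℕ) (δ δ' : Fin n) : Set (Fin n →₀ ℕ) :=
  {m | m ∈ Tar' r s w δ ∧ w ≤ m δ'}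

/-- `trailmon = {m ∈ O : deg m = s}`. -/
def Trail {n : ℕ} (r s w : ℕ) (δ : Fin n) : Set (Fin n →₀ ℕ) :=
  {m | m ∈ OIdeal r s w δ ∧ mdeg m = s}

/-- `leadmon = {m : deg m = r, m ∉ O}`. -/
def Lead {n : ℕ} (r s w : ℕ) (δ : Fin n) : Set (Fin n →₀ ℕ) :=
  {m | mdeg m = r ∧ m ∉ OIdeal r s w δ}

/-- `Seg_a`: δ-monomials of degree `r` with `x_δ`-exponent `r − a`. -/
def SegA {n : ℕ} (r a : ℕ) (δ : Fin n) : Set (Fin n →₀ ℕ) :=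
  {b | IsDeltaMon δ b ∧ mdeg b = r ∧ b δ = r - a}

/-- The monomial `x_δ^{r−a}·x_{δ+1}^{a}` (`δ'` is the index of `x_{δ+1}`). -/
def bstar {n : ℕ} (r a : ℕ) (δ δ' : Fin n) : Fin n →₀ ℕ :=
  Finsupp.single δ (r - a) + Finsupp.single δ' a

/-- Truncation: sum of homogeneous components of degree `0` through `s`. -/
def truncLE {n : ℕ} {R : Type*} [CommRing R] (s : ℕ) (P : MvPolynomial (Fin n) R) :
    MvPolynomial (Fin n) R :=
  ∑ m ∈ P.support.filter (fun m => mdeg m ≤ s), monomial m (coeff m P)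

/-- `optX R none = 1 = X₀`, `optX R (some a) = X a`. -/
def optX {n : ℕ} (R : Type*) [CommRing R] : Option (Fin n) → MvPolynomial (Fin n) R
  | none => 1
  | some a => X a

/-- `optE none = 0 = e₀`, `optE (some a) = e_a`. -/
def optE {n : ℕ} : Option (Fin n) → (Fin n →₀ ℕ)
  | none => 0
  | some a => Finsupp.single a 1

/-- The reduction operator determined by a target function `UpsD` on `S_D`. -/
def redFn {n : ℕ} {R : Type*} [CommRing R] (r s w : ℕ) (δ : Fin n)
    (UpsD : (Fin n →₀ ℕ) → MvPolynomial (Fin n) R) (P : MvPolynomial (Fin n) R) :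
    MvPolynomial (Fin n) R :=
  (∑ m ∈ P.support.filter (fun m => m ∈ Tar r s w δ), monomial m (coeff m P)) -
  ∑ m ∈ P.support.filter (fun m => m ∈ SD r s w δ), coeff m P • UpsD m

/-- The polynomial ring over `K` in the distinguished indeterminates `C_{(t,b)}`
and the modification indeterminates `θ_m`. -/
abbrev BigA (K : Type*) [Field K] {n : ℕ} (r s w : ℕ) (δ δ' : Fin n) : Type _ :=
  MvPolynomial ((↥(Trail r s w δ) × ↥(Lead r s w δ)) ⊕ ↥(Tar'' r s w δ δ')) K

/-- The generic linear combination `N_b = Σ_t C_{(t,b)}·X^t` for `b ∈ leadmon`, `0` otherwise. -/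
def NB (K : Type*) [Field K] {n : ℕ} (r s w : ℕ) (δ δ' : Fin n) (b : Fin n →₀ ℕ) :
    MvPolynomial (Fin n) (BigA K r s w δ δ') :=
  if hb : b ∈ Lead r s w δ then
    ∑ᶠ t : ↥(Trail r s w δ),
      monomial (t : Fin n →₀ ℕ)
        (MvPolynomial.X (Sum.inl (t, ⟨b, hb⟩)) : BigA K r s w δ δ')
  else 0

lemma mdeg_add {n : ℕ} (x y : Fin n →₀ ℕ) : mdeg (x + y) = mdeg x + mdeg y := by
  simp [mdeg, Finset.sum_add_distrib]

lemma mdeg_single {n : ℕ} (α : Fin n) (c : ℕ) : mdeg (Finsupp.single α c) = c := by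
  simp [mdeg, Finsupp.single_apply]

lemma le_mdeg {n : ℕ} (m : Fin n →₀ ℕ) (k : Fin n) : m k ≤ mdeg m :=
  Finset.single_le_sum (fun _ _ => Nat.zero_le _) (Finset.mem_univ k)

lemma mdeg_tsub {n : ℕ} {x y : Fin n →₀ ℕ} (h : y ≤ x) :
    mdeg (x - y) = mdeg x - mdeg y := by
  have := mdeg_add (x - y) y
  rw [tsub_add_cancel_of_le h] at this
  omega

/-- existence of a compatible target assignment on an arbitrary segment
`Seg_a`, starting from an initial target divisible by `x_{δ+1}^a`. -/
theorem statement18 (R : Type*) [CommRing R] (n r s w : ℕ) (δ : Fin n)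
    (hn : 2 ≤ n) (hr : 2 ≤ r) (hrs : r < s) (hδ : (δ : ℕ) + 1 < n) (hw : w + 1 ≤ r)
    (a : ℕ) (ha : a ≤ w)
    (P : MvPolynomial (Fin n) R)
    (hP : (P.support : Set (Fin n →₀ ℕ)) ⊆ Tar' r s w δ)
    (hP' : ∀ m ∈ P.support, a ≤ m ⟨(δ : ℕ) + 1, hδ⟩) :
    ∃ Ups : (Fin n →₀ ℕ) → MvPolynomial (Fin n) R,
      Ups (bstar r a δ ⟨(δ : ℕ) + 1, hδ⟩) = P ∧
      (∀ b ∈ SegA r a δ, ((Ups b).support : Set (Fin n →₀ ℕ)) ⊆ Tar' r s w δ) ∧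
      (∀ b ∈ SegA r a δ, ∀ b' ∈ SegA r a δ, ∀ α β : Fin n, δ ≤ α → δ ≤ β →
        Finsupp.single α 1 + b = Finsupp.single β 1 + b' →
        X α * Ups b = X β * Ups b') := by
  set δ' : Fin n := ⟨(δ : ℕ) + 1, hδ⟩ with hδ'def
  have hδne : δ ≠ δ' := by
    intro h
    have : (δ : ℕ) = (δ : ℕ) + 1 := congrArg Fin.val h
    omega
  set e : Fin n →₀ ℕ := Finsupp.single δ' a with hedef
  set f : Fin n →₀ ℕ := Finsupp.single δ (r - a) with hfdef
  have heP : ∀ m ∈ P.support, e ≤ m := by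
    intro m hm
    rw [hedef, Finsupp.single_le_iff]
    exact hP' m hm
  refine ⟨fun b => ∑ m ∈ P.support, monomial (m - e + (b - f)) (coeff m P), ?_, ?_, ?_⟩
  · -- Ups bstar = P
    have hbf : bstar r a δ δ' - f = e := by
      rw [hfdef, hedef, bstar, add_tsub_cancel_left]
    have : ∀ m ∈ P.support, monomial (m - e + e) (coeff m P) = monomial m (coeff m P) := by
      intro m hm
      rw [tsub_add_cancel_of_le (heP m hm)]
    simp only []
    rw [hbf, Finset.sum_congr rfl this, MvPolynomial.support_sum_monomial_coeff]
  · -- support in Tar'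
    intro b hb t ht
    simp only [Finset.coe_subset, Set.mem_setOf_eq] at ht ⊢
    have ht' := MvPolynomial.support_sum ht
    rw [Finset.mem_biUnion] at ht'
    obtain ⟨m, hm, htm⟩ := ht'
    have htm' : t = m - e + (b - f) := by
      have := MvPolynomial.support_monomial_subset htm
      simpa using this
    obtain ⟨hbmon, hbdeg, hbδ⟩ := hb
    have hfb : f ≤ b := by
      rw [hfdef, Finsupp.single_le_iff, hbδ]
    have hmTar' := hP hm
    obtain ⟨⟨hmO, hmr, hms⟩, hms1⟩ := hmTar'
    have hmO' : IsDeltaMon δ m ∧ r ≤ mdeg m ∧ mdeg m ≤ s ∧ m δ + w + 1 ≤ r := by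
      rcases hmO with h | h
      · omega
      · exact h
    obtain ⟨hmmon, _, _, hmδ⟩ := hmO'
    have ham : a ≤ mdeg m := le_trans (hP' m hm) (le_mdeg m δ')
    have hdegt : mdeg t = mdeg m := by
      rw [htm', mdeg_add, mdeg_tsub (heP m hm), mdeg_tsub hfb, hedef, hfdef,
        mdeg_single, mdeg_single, hbdeg]
      omega
    have he1 : e δ = 0 := Finsupp.single_eq_of_ne hδne
    have hf1 : f δ = r - a := Finsupp.single_eq_same
    have htδ : t δ = m δ := by
      rw [htm']
      simp only [Finsupp.add_apply, Finsupp.tsub_apply, he1, hf1, hbδ]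
      omega
    have htmon : IsDeltaMon δ t := by
      intro k hk
      have h1 : m k = 0 := hmmon k hk
      have h2 : b k = 0 := hbmon k hk
      rw [htm']
      simp only [Finsupp.add_apply, Finsupp.tsub_apply, h1, h2]
      omega
    refine ⟨⟨Or.inr ⟨htmon, by omega, by omega, by omega⟩, by omega, by omega⟩, by omega⟩
  · -- compatibility
    intro b hb b' hb' α β hα hβ heq
    have hfb : f ≤ b := by
      rw [hfdef, Finsupp.single_le_iff, hb.2.2]
    have hfb' : f ≤ b' := by
      rw [hfdef, Finsupp.single_le_iff, hb'.2.2]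
    have key : Finsupp.single α 1 + (b - f) = Finsupp.single β 1 + (b' - f) := by
      rw [← add_tsub_assoc_of_le hfb, ← add_tsub_assoc_of_le hfb', heq]
    rw [Finset.mul_sum, Finset.mul_sum]
    refine Finset.sum_congr rfl fun m hm => ?_
    simp only [MvPolynomial.X, MvPolynomial.monomial_mul, one_mul]
    rw [add_left_comm, add_left_comm (Finsupp.single β 1), key]
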